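/- Let n ≥ 1 and s ≥ 3 be integers, and let P_n(x) = a₀ + a₁x + ⋯ + a_n x^n, Q_n(x) = b₀ + b₁x + ⋯ + b_n x^n, T_n(x) = c₀ + c₁x + ⋯ + c_n x^n be polynomials with arbitrary real coefficients. Then the s-fold integral I_s(n) = ∫₀¹⋯∫₀¹ P_n(x₁)Q_n(x₂)T_n(x₃)/(1 − x₁x₂x₃⋯x_s) dx₁ dx₂ dx₃ ⋯ dx_s equals the absolutely convergent series ∑_{k=0}^{∞} (1/(k+1)^{s−3}) ∑_{r₁=0}^{n} ∑_{r₂=0}^{n} ∑_{r₃=0}^{n} a_{r₁} b_{r₂} c_{r₃} / ((r₁+k+1)(r₂+k+1)(r₃+k+1)). -/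

import Mathlib

open MeasureTheory Finset

lemma aux2 (k : ℕ) : ∫ y in Set.Icc (0:ℝ) 1, y ^ k = 1 / ((k:ℝ) + 1) := by
  rw [integral_Icc_eq_integral_Ioc, ← intervalIntegral.integral_of_le zero_le_one,
    integral_pow]
  ring

lemma aux1 (k n : ℕ) (d : ℕ → ℝ) :
    ∫ y in Set.Icc (0:ℝ) 1, (∑ r ∈ range (n+1), d r * y ^ r) * y ^ k
      = ∑ r ∈ range (n+1), d r / ((r:ℝ) + k + 1) := by
  simp_rw [sum_mul, mul_assoc, ← pow_add]
  rw [integral_finset_sum]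
  · refine Finset.sum_congr rfl fun r _ => ?_
    rw [integral_const_mul, aux2]
    push_cast
    ring
  · intro r _
    apply Continuous.integrableOn_Icc
    continuity

lemma aux3 (k n : ℕ) (d : ℕ → ℝ) :
    ∫ y in Set.Icc (0:ℝ) 1, |(∑ r ∈ range (n+1), d r * y ^ r) * y ^ k|
      ≤ (∑ r ∈ range (n+1), |d r|) * (1 / ((k:ℝ) + 1)) := by
  have h1 : ∫ y in Set.Icc (0:ℝ) 1, (∑ r ∈ range (n+1), |d r|) * y ^ k
      = (∑ r ∈ range (n+1), |d r|) * (1 / ((k:ℝ) + 1)) := by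
    rw [integral_const_mul, aux2]
  rw [← h1]
  apply setIntegral_mono_on
  · apply Continuous.integrableOn_Icc
    continuity
  · apply Continuous.integrableOn_Icc
    continuity
  · exact measurableSet_Icc
  · intro y hy
    obtain ⟨hy0, hy1⟩ := hy
    rw [abs_mul, abs_pow, abs_of_nonneg hy0]
    gcongr
    calc |∑ r ∈ range (n+1), d r * y ^ r| ≤ ∑ r ∈ range (n+1), |d r * y ^ r| :=
          Finset.abs_sum_le_sum_abs _ _
      _ ≤ ∑ r ∈ range (n+1), |d r| := by
          apply Finset.sum_le_sum
          intro r _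
          rw [abs_mul, abs_pow, abs_of_nonneg hy0]
          calc |d r| * y ^ r ≤ |d r| * 1 := by
                gcongr
                exact pow_le_one₀ hy0 hy1
            _ = |d r| := mul_one _

/-- Fubini on the unit cube for a product function. -/
lemma cube_prod {s : ℕ} (G : Fin s → ℝ → ℝ) :
    ∫ x in Set.Icc (0 : Fin s → ℝ) 1, ∏ i, G i (x i)
      = ∏ i, ∫ y in Set.Icc (0:ℝ) 1, G i y := by
  rw [← integral_indicator measurableSet_Icc]
  have h : Set.indicator (Set.Icc (0:Fin s→ℝ) 1) (fun x => ∏ i, G i (x i))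
      = fun x => ∏ i, Set.indicator (Set.Icc (0:ℝ) 1) (G i) (x i) := by
    funext x
    by_cases hx : x ∈ Set.Icc (0:Fin s→ℝ) 1
    · rw [Set.indicator_of_mem hx]
      exact Finset.prod_congr rfl fun i _ =>
        (Set.indicator_of_mem (Set.mem_Icc.mpr ⟨hx.1 i, hx.2 i⟩) _).symm
    · rw [Set.indicator_of_notMem hx]
      rw [← Set.pi_univ_Icc, Set.mem_univ_pi] at hx
      push_neg at hx
      obtain ⟨i, hi⟩ := hx
      exact (Finset.prod_eq_zero (Finset.mem_univ i)
        (Set.indicator_of_notMem hi _)).symm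
  rw [h, MeasureTheory.integral_fintype_prod_volume_eq_prod
    (f := fun i y => Set.indicator (Set.Icc (0:ℝ) 1) (G i) y)]
  exact Finset.prod_congr rfl fun i _ => integral_indicator measurableSet_Icc

/-- splitting a product over `Fin s` into the first three factors and the rest. -/
lemma prod_split {s : ℕ} (hs : 3 ≤ s) (F : Fin s → ℝ) (c : ℝ)
    (h : ∀ i : Fin s, 3 ≤ (i:ℕ) → F i = c) :
    ∏ i, F i = F ⟨0, by omega⟩ * F ⟨1, by omega⟩ * F ⟨2, by omega⟩ * c ^ (s - 3) := by
  classical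
  set i0 : Fin s := ⟨0, by omega⟩ with hi0
  set i1 : Fin s := ⟨1, by omega⟩ with hi1
  set i2 : Fin s := ⟨2, by omega⟩ with hi2
  set t : Finset (Fin s) := {i0, i1, i2} with ht
  have h01 : i0 ≠ i1 := by simp [hi0, hi1, Fin.ext_iff]
  have h02 : i0 ≠ i2 := by simp [hi0, hi2, Fin.ext_iff]
  have h12 : i1 ≠ i2 := by simp [hi1, hi2, Fin.ext_iff]
  have hmem : ∀ i : Fin s, i ∉ t → 3 ≤ (i:ℕ) := by
    intro i hi
    simp only [ht, Finset.mem_insert, Finset.mem_singleton] at hi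
    push_neg at hi
    obtain ⟨n0, n1, n2⟩ := hi
    simp only [hi0, hi1, hi2, ne_eq, Fin.ext_iff, Fin.val_mk] at n0 n1 n2
    omega
  have hcard : t.card = 3 := by
    rw [ht, Finset.card_insert_of_notMem (by simp [h01, h02]),
      Finset.card_insert_of_notMem (by simp [h12]), Finset.card_singleton]
  have hsplit := Finset.prod_mul_prod_compl t F
  have h1 : ∏ i ∈ t, F i = F i0 * F i1 * F i2 := by
    rw [ht, Finset.prod_insert (by simp [h01, h02]),
      Finset.prod_insert (by simp [h12]), Finset.prod_singleton, mul_assoc]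
  have h2 : ∏ i ∈ tᶜ, F i = c ^ (s - 3) := by
    rw [Finset.prod_congr rfl (fun i hi => h i (hmem i (Finset.mem_compl.mp hi))),
      Finset.prod_const, Finset.card_compl, hcard, Fintype.card_fin]
  rw [← hsplit, h1, h2]

/-- the coordinate factor polynomials -/
noncomputable def polAux (Pf Qf Tf : ℝ → ℝ) (m : ℕ) : ℝ → ℝ :=
  if m = 0 then Pf else if m = 1 then Qf else if m = 2 then Tf else fun _ => 1

theorem stmt_5 (n s : ℕ) (hn : 1 ≤ n) (hs : 3 ≤ s) (a b c : ℕ → ℝ) :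
    Summable (fun k : ℕ =>
      |(1 / ((k : ℝ) + 1) ^ (s - 3)) *
        ∑ r₁ ∈ Finset.range (n + 1), ∑ r₂ ∈ Finset.range (n + 1),
          ∑ r₃ ∈ Finset.range (n + 1),
            a r₁ * b r₂ * c r₃ /
              (((r₁ : ℝ) + k + 1) * ((r₂ : ℝ) + k + 1) * ((r₃ : ℝ) + k + 1))|) ∧
    (∫ x in Set.Icc (0 : Fin s → ℝ) 1,
        (∑ i ∈ Finset.range (n + 1), a i * x ⟨0, by omega⟩ ^ i) *
          (∑ i ∈ Finset.range (n + 1), b i * x ⟨1, by omega⟩ ^ i) *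
          (∑ i ∈ Finset.range (n + 1), c i * x ⟨2, by omega⟩ ^ i) /
          (1 - ∏ i, x i)) =
      ∑' k : ℕ,
        (1 / ((k : ℝ) + 1) ^ (s - 3)) *
          ∑ r₁ ∈ Finset.range (n + 1), ∑ r₂ ∈ Finset.range (n + 1),
            ∑ r₃ ∈ Finset.range (n + 1),
              a r₁ * b r₂ * c r₃ /
                (((r₁ : ℝ) + k + 1) * ((r₂ : ℝ) + k + 1) * ((r₃ : ℝ) + k + 1)) := by
  classical
  set i0 : Fin s := ⟨0, by omega⟩ with hi0
  set i1 : Fin s := ⟨1, by omega⟩ with hi1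
  set i2 : Fin s := ⟨2, by omega⟩ with hi2
  set Pf : ℝ → ℝ := fun y => ∑ i ∈ Finset.range (n + 1), a i * y ^ i with hPf
  set Qf : ℝ → ℝ := fun y => ∑ i ∈ Finset.range (n + 1), b i * y ^ i with hQf
  set Tf : ℝ → ℝ := fun y => ∑ i ∈ Finset.range (n + 1), c i * y ^ i with hTf
  set pol : Fin s → ℝ → ℝ := fun i => polAux Pf Qf Tf (i : ℕ) with hpol
  set f : ℕ → (Fin s → ℝ) → ℝ := fun k x => ∏ i, pol i (x i) * (x i) ^ k with hf
  set term : ℕ → ℝ := fun k =>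
    (1 / ((k : ℝ) + 1) ^ (s - 3)) *
      ∑ r₁ ∈ Finset.range (n + 1), ∑ r₂ ∈ Finset.range (n + 1),
        ∑ r₃ ∈ Finset.range (n + 1),
          a r₁ * b r₂ * c r₃ /
            (((r₁ : ℝ) + k + 1) * ((r₂ : ℝ) + k + 1) * ((r₃ : ℝ) + k + 1)) with hterm
  -- values of pol
  have hpol0 : pol i0 = Pf := rfl
  have hpol1 : pol i1 = Qf := rfl
  have hpol2 : pol i2 = Tf := rfl
  have hpol3 : ∀ i : Fin s, 3 ≤ (i:ℕ) → pol i = fun _ => 1 := by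
    intro i hi
    simp only [hpol, polAux]
    rw [if_neg (by omega), if_neg (by omega), if_neg (by omega)]
  -- continuity
  have hPQTc : Continuous Pf ∧ Continuous Qf ∧ Continuous Tf := by
    refine ⟨?_, ?_, ?_⟩ <;>
      exact continuous_finset_sum _ fun i _ => continuous_const.mul (continuous_pow i)
  have hpolc : ∀ i : Fin s, Continuous (pol i) := by
    intro i
    simp only [hpol, polAux]
    split_ifs
    exacts [hPQTc.1, hPQTc.2.1, hPQTc.2.2, continuous_const]
  have hcont : ∀ k, Continuous (f k) := by
    intro k
    simp only [hf]
    exact continuous_finset_prod _ fun i _ =>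
      ((hpolc i).comp (continuous_apply i)).mul ((continuous_apply i).pow k)
  have hint : ∀ k, IntegrableOn (f k) (Set.Icc (0 : Fin s → ℝ) 1) volume :=
    fun k => (hcont k).continuousOn.integrableOn_compact isCompact_Icc
  -- value of the integral of f k
  have hval : ∀ k, ∫ x in Set.Icc (0 : Fin s → ℝ) 1, f k x = term k := by
    intro k
    rw [show (fun x : Fin s → ℝ => f k x) = fun x => ∏ i, pol i (x i) * (x i) ^ k from rfl]
    rw [cube_prod (fun i y => pol i y * y ^ k)]
    rw [prod_split hs (fun i => ∫ y in Set.Icc (0:ℝ) 1, pol i y * y ^ k)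
      (1 / ((k:ℝ) + 1)) (by
        intro i hi
        simp only [hpol3 i hi, one_mul]
        exact aux2 k)]
    show (∫ y in Set.Icc (0:ℝ) 1, pol i0 y * y ^ k) *
        (∫ y in Set.Icc (0:ℝ) 1, pol i1 y * y ^ k) *
        (∫ y in Set.Icc (0:ℝ) 1, pol i2 y * y ^ k) * (1 / ((k:ℝ)+1)) ^ (s-3) = term k
    rw [hpol0, hpol1, hpol2, hPf, hQf, hTf]
    simp only []
    rw [aux1 k n a, aux1 k n b, aux1 k n c, hterm]
    rw [div_pow, one_pow]
    have key : (∑ r ∈ range (n+1), a r / ((r:ℝ) + k + 1)) *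
        (∑ r ∈ range (n+1), b r / ((r:ℝ) + k + 1)) *
        (∑ r ∈ range (n+1), c r / ((r:ℝ) + k + 1))
        = ∑ r₁ ∈ Finset.range (n + 1), ∑ r₂ ∈ Finset.range (n + 1),
            ∑ r₃ ∈ Finset.range (n + 1),
              a r₁ * b r₂ * c r₃ /
                (((r₁ : ℝ) + k + 1) * ((r₂ : ℝ) + k + 1) * ((r₃ : ℝ) + k + 1)) := by
      rw [Finset.sum_mul_sum, Finset.sum_mul]
      refine Finset.sum_congr rfl fun r1 _ => ?_
      rw [Finset.sum_mul]
      refine Finset.sum_congr rfl fun r2 _ => ?_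
      rw [Finset.mul_sum]
      refine Finset.sum_congr rfl fun r3 _ => ?_
      rw [div_mul_div_comm, div_mul_div_comm]
    rw [key, mul_comm]
  -- bound on the integral of ‖f k‖
  set Ma : ℝ := ∑ r ∈ range (n+1), |a r| with hMa
  set Mb : ℝ := ∑ r ∈ range (n+1), |b r| with hMb
  set Mc : ℝ := ∑ r ∈ range (n+1), |c r| with hMc
  have hnorm : ∀ k, (∫ x in Set.Icc (0 : Fin s → ℝ) 1, ‖f k x‖)
      ≤ Ma * Mb * Mc * (1 / ((k:ℝ)+1)) ^ 3 := by
    intro k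
    have e1 : (∫ x in Set.Icc (0 : Fin s → ℝ) 1, ‖f k x‖)
        = ∏ i, ∫ y in Set.Icc (0:ℝ) 1, |pol i y * y ^ k| := by
      rw [← cube_prod (fun i y => |pol i y * y ^ k|)]
      refine setIntegral_congr_fun measurableSet_Icc fun x _ => ?_
      rw [Real.norm_eq_abs, hf]
      exact Finset.abs_prod _ _
    rw [e1, prod_split hs (fun i => ∫ y in Set.Icc (0:ℝ) 1, |pol i y * y ^ k|)
      (1 / ((k:ℝ) + 1)) (by
        intro i hi
        simp only [hpol3 i hi, one_mul]
        rw [setIntegral_congr_fun measurableSet_Icc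
          (fun y hy => abs_of_nonneg (pow_nonneg hy.1 k))]
        exact aux2 k)]
    have hk1 : (0:ℝ) < 1 / ((k:ℝ)+1) := by positivity
    have b0 : (∫ y in Set.Icc (0:ℝ) 1, |Pf y * y ^ k|) ≤ Ma * (1 / ((k:ℝ) + 1)) :=
      aux3 k n a
    have b1 : (∫ y in Set.Icc (0:ℝ) 1, |Qf y * y ^ k|) ≤ Mb * (1 / ((k:ℝ) + 1)) :=
      aux3 k n b
    have b2 : (∫ y in Set.Icc (0:ℝ) 1, |Tf y * y ^ k|) ≤ Mc * (1 / ((k:ℝ) + 1)) :=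
      aux3 k n c
    rw [hpol0, hpol1, hpol2]
    calc (∫ y in Set.Icc (0:ℝ) 1, |Pf y * y ^ k|) *
          (∫ y in Set.Icc (0:ℝ) 1, |Qf y * y ^ k|) *
          (∫ y in Set.Icc (0:ℝ) 1, |Tf y * y ^ k|) * (1/((k:ℝ)+1)) ^ (s-3)
        ≤ (Ma * (1/((k:ℝ)+1))) * (Mb * (1/((k:ℝ)+1))) * (Mc * (1/((k:ℝ)+1))) * 1 := by
          gcongr <;>
            first
              | exact integral_nonneg fun y => abs_nonneg _
              | exact b0
              | exact b1
              | exact b2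
              | positivity
              | exact pow_le_one₀ (by positivity) (by
                  rw [div_le_one (by positivity)]
                  linarith [Nat.cast_nonneg (α := ℝ) k])
      _ = Ma * Mb * Mc * (1 / ((k:ℝ)+1)) ^ 3 := by ring
  have hnn : ∀ k, 0 ≤ ∫ x in Set.Icc (0 : Fin s → ℝ) 1, ‖f k x‖ :=
    fun k => integral_nonneg fun x => norm_nonneg _
  have hsummb : Summable (fun k : ℕ => Ma * Mb * Mc * (1 / ((k:ℝ)+1)) ^ 3) := by
    apply Summable.mul_left
    have h1 : Summable (fun m : ℕ => 1 / (m : ℝ) ^ 3) :=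
      Real.summable_one_div_nat_pow.mpr (by norm_num)
    have h2 := (summable_nat_add_iff 1).mpr h1
    refine h2.congr fun m => ?_
    push_cast
    rw [div_pow, one_pow]
  have hsumnorm : Summable (fun k => ∫ x in Set.Icc (0 : Fin s → ℝ) 1, ‖f k x‖) :=
    Summable.of_nonneg_of_le hnn hnorm hsummb
  -- a.e. identification of the integrand with the series
  have hnull : volume {x : Fin s → ℝ | x i0 = 1} = 0 := by
    have he : {x : Fin s → ℝ | x i0 = 1}
        = Set.pi Set.univ (fun i => if i = i0 then ({1} : Set ℝ) else Set.univ) := by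
      ext x
      simp only [Set.mem_setOf_eq, Set.mem_univ_pi]
      constructor
      · intro hx i
        by_cases hii : i = i0 <;> simp [hii, hx]
      · intro hx
        have := hx i0
        simpa using this
    rw [he, volume_pi, Measure.pi_pi]
    exact Finset.prod_eq_zero (Finset.mem_univ i0) (by simp)
  have hae : ∀ᵐ x ∂(volume.restrict (Set.Icc (0 : Fin s → ℝ) 1)),
      (∑' k, f k x) = Pf (x i0) * Qf (x i1) * Tf (x i2) / (1 - ∏ i, x i) := by
    have h1 : ∀ᵐ x ∂(volume.restrict (Set.Icc (0 : Fin s → ℝ) 1)), x i0 ≠ 1 :=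
      ae_restrict_of_ae (by
        rw [ae_iff]
        simpa using hnull)
    have h2 : ∀ᵐ x ∂(volume.restrict (Set.Icc (0 : Fin s → ℝ) 1)),
        x ∈ Set.Icc (0 : Fin s → ℝ) 1 := ae_restrict_mem measurableSet_Icc
    filter_upwards [h1, h2] with x hx1 hx2
    have hx0 : ∀ i, 0 ≤ x i := fun i => hx2.1 i
    have hxle : ∀ i, x i ≤ 1 := fun i => hx2.2 i
    have hr0 : 0 ≤ ∏ i, x i := Finset.prod_nonneg fun i _ => hx0 i
    have hr1 : ∏ i, x i < 1 := by
      have hle : ∏ i, x i ≤ x i0 := by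
        rw [← Finset.mul_prod_erase Finset.univ x (Finset.mem_univ i0)]
        calc x i0 * ∏ i ∈ Finset.univ.erase i0, x i ≤ x i0 * 1 := by
              gcongr
              · exact hx0 i0
              · exact Finset.prod_le_one (fun i _ => hx0 i) (fun i _ => hxle i)
          _ = x i0 := mul_one _
      exact lt_of_le_of_lt hle (lt_of_le_of_ne (hxle i0) hx1)
    have geo : HasSum (fun k : ℕ => (∏ i, x i) ^ k) (1 - ∏ i, x i)⁻¹ :=
      hasSum_geometric_of_lt_one hr0 hr1
    have hfx : ∀ k, f k x = Pf (x i0) * Qf (x i1) * Tf (x i2) * (∏ i, x i) ^ k := by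
      intro k
      rw [hf]
      simp only []
      rw [Finset.prod_mul_distrib, ← Finset.prod_pow]
      congr 1
      rw [prod_split hs (fun i => pol i (x i)) 1 (fun i hi => by simp only [hpol3 i hi])]
      show pol i0 (x i0) * pol i1 (x i1) * pol i2 (x i2) * 1 ^ (s - 3) = _
      rw [hpol0, hpol1, hpol2, one_pow, mul_one]
    calc (∑' k, f k x) = ∑' k, Pf (x i0) * Qf (x i1) * Tf (x i2) * (∏ i, x i) ^ k := by
          exact tsum_congr hfx
      _ = Pf (x i0) * Qf (x i1) * Tf (x i2) * (1 - ∏ i, x i)⁻¹ :=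
          (geo.mul_left _).tsum_eq
      _ = Pf (x i0) * Qf (x i1) * Tf (x i2) / (1 - ∏ i, x i) := by
          rw [div_eq_mul_inv]
  -- assemble
  have Hsum := hasSum_integral_of_summable_integral_norm
      (μ := volume.restrict (Set.Icc (0 : Fin s → ℝ) 1)) (F := f) hint hsumnorm
  rw [integral_congr_ae hae] at Hsum
  have hfun : (fun k => ∫ x in Set.Icc (0 : Fin s → ℝ) 1, f k x) = term := funext hval
  rw [hfun] at Hsum
  constructor
  · refine Summable.of_nonneg_of_le (fun k => abs_nonneg _) (fun k => ?_) hsumnorm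
    have hb : |term k| ≤ ∫ x in Set.Icc (0 : Fin s → ℝ) 1, ‖f k x‖ := by
      rw [← hval k, ← Real.norm_eq_abs]
      exact norm_integral_le_integral_norm _
    exact hb
  · exact Hsum.tsum_eq.symm
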